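/- Let 𝐌=(M_1,…,M_k) be a positively irreducible tuple of nonnegative d×d matrices. Then 𝐌 has a uniform Lyapunov exponent modulo 0 if and only if there exists C>0 such that for every n≥1 and every word J=j_1⋯j_n with M_J≠0, one has C⁻¹·r(𝐌)^n ≤ ‖M_J‖ ≤ C·r(𝐌)^n. -/

import Mathlib

open Filter Real MeasureTheory

/-- The matrix norm `‖A‖ = ∑_{i,j} |A i j|`. -/
noncomputable def mnorm {d : ℕ} (A : Matrix (Fin d) (Fin d) ℝ) : ℝ :=
  ∑ i, ∑ j, |A i j|

/-- The product `M_{j₁} ⋯ M_{jₙ}` along a word `w = j₁⋯jₙ`. -/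
noncomputable def wordProd {d k : ℕ} (M : Fin k → Matrix (Fin d) (Fin d) ℝ)
    (w : List (Fin k)) : Matrix (Fin d) (Fin d) ℝ :=
  (w.map M).prod

/-- `𝐌` has a uniform Lyapunov exponent modulo 0. -/
def HasULE {d k : ℕ} (M : Fin k → Matrix (Fin d) (Fin d) ℝ) : Prop :=
  ∃ C : ℝ, 0 < C ∧ ∃ lam : ℝ, ∀ w : List (Fin k), w ≠ [] →
    wordProd M w = 0 ∨
      (C⁻¹ * Real.exp (lam * w.length) ≤ mnorm (wordProd M w) ∧
        mnorm (wordProd M w) ≤ C * Real.exp (lam * w.length))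

/-- `𝐌` is irreducible: no nonzero proper subspace is invariant under all `M i`. -/
def MatIrred {d k : ℕ} (M : Fin k → Matrix (Fin d) (Fin d) ℝ) : Prop :=
  ∀ V : Submodule ℝ (Fin d → ℝ),
    (∀ i, ∀ v ∈ V, (M i).mulVec v ∈ V) → V = ⊥ ∨ V = ⊤

/-- `𝐌` is positively irreducible. -/
def PosIrred {d k : ℕ} (M : Fin k → Matrix (Fin d) (Fin d) ℝ) : Prop :=
  (∀ i a b, 0 ≤ M i a b) ∧
    ∃ ℓ : ℕ, 1 ≤ ℓ ∧ ∀ a b, 0 < (∑ j ∈ Finset.Icc 1 ℓ, (∑ i, M i) ^ j) a b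

/-- A single nonnegative matrix is positively irreducible:
some partial sum of its powers is entrywise positive. -/
def PosIrredMat {n : ℕ} (A : Matrix (Fin n) (Fin n) ℝ) : Prop :=
  ∃ ℓ : ℕ, 1 ≤ ℓ ∧ ∀ a b, 0 < (∑ j ∈ Finset.Icc 1 ℓ, A ^ j) a b

/-! ### Auxiliary lemmas -/

lemma mnorm_nonneg' {d : ℕ} (A : Matrix (Fin d) (Fin d) ℝ) : 0 ≤ mnorm A := by
  apply Finset.sum_nonneg; intro i _; apply Finset.sum_nonneg; intro j _; positivity

lemma mnorm_zero' {d : ℕ} : mnorm (0 : Matrix (Fin d) (Fin d) ℝ) = 0 := by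
  simp [mnorm]

lemma mnorm_pos' {d : ℕ} {A : Matrix (Fin d) (Fin d) ℝ} (h : A ≠ 0) : 0 < mnorm A := by
  rcases (mnorm_nonneg' A).lt_or_eq with h' | h'
  · exact h'
  · exfalso; apply h
    ext a b
    have h1 : ∀ a ∈ (Finset.univ : Finset (Fin d)), (0:ℝ) ≤ ∑ j, |A a j| := by
      intro a _; apply Finset.sum_nonneg; intro j _; positivity
    have h2 := (Finset.sum_eq_zero_iff_of_nonneg h1).mp h'.symm a (Finset.mem_univ a)
    have h3 : ∀ j ∈ (Finset.univ : Finset (Fin d)), (0:ℝ) ≤ |A a j| := by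
      intro j _; positivity
    have := (Finset.sum_eq_zero_iff_of_nonneg h3).mp h2 b (Finset.mem_univ b)
    simpa using this

lemma mnorm_eq_sum' {d : ℕ} {A : Matrix (Fin d) (Fin d) ℝ} (h : ∀ a b, 0 ≤ A a b) :
    mnorm A = ∑ a, ∑ b, A a b := by
  unfold mnorm; congr 1; ext a; congr 1; ext b; exact abs_of_nonneg (h a b)

lemma mnorm_sum' {d : ℕ} {ι : Type*} (s : Finset ι) (B : ι → Matrix (Fin d) (Fin d) ℝ)
    (h : ∀ f ∈ s, ∀ a b, 0 ≤ B f a b) : mnorm (∑ f ∈ s, B f) = ∑ f ∈ s, mnorm (B f) := by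
  rw [mnorm_eq_sum' (fun a b => by
    rw [Matrix.sum_apply]
    exact Finset.sum_nonneg fun f hf => h f hf a b)]
  rw [Finset.sum_congr rfl (fun f hf => mnorm_eq_sum' (h f hf))]
  calc ∑ a, ∑ b, (∑ f ∈ s, B f) a b
      = ∑ a, ∑ b, ∑ f ∈ s, B f a b := Finset.sum_congr rfl fun a _ =>
        Finset.sum_congr rfl fun b _ => by rw [Matrix.sum_apply]
    _ = ∑ a, ∑ f ∈ s, ∑ b, B f a b := Finset.sum_congr rfl fun a _ => Finset.sum_comm
    _ = ∑ f ∈ s, ∑ a, ∑ b, B f a b := Finset.sum_comm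

lemma mul_entries_nonneg' {d : ℕ} {A B : Matrix (Fin d) (Fin d) ℝ}
    (hA : ∀ a b, 0 ≤ A a b) (hB : ∀ a b, 0 ≤ B a b) : ∀ a b, 0 ≤ (A * B) a b := by
  intro a b
  rw [Matrix.mul_apply]
  exact Finset.sum_nonneg fun c _ => mul_nonneg (hA a c) (hB c b)

lemma wordProd_cons' {d k : ℕ} (M : Fin k → Matrix (Fin d) (Fin d) ℝ) (i : Fin k)
    (w : List (Fin k)) : wordProd M (i :: w) = M i * wordProd M w := by
  simp [wordProd]

lemma wordProd_nonneg' {d k : ℕ} {M : Fin k → Matrix (Fin d) (Fin d) ℝ}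
    (h : ∀ i a b, 0 ≤ M i a b) (w : List (Fin k)) : ∀ a b, 0 ≤ wordProd M w a b := by
  induction w with
  | nil => intro a b; by_cases hab : a = b <;> simp [wordProd, Matrix.one_apply, hab]
  | cons i w ih => rw [wordProd_cons']; exact mul_entries_nonneg' (h i) ih

lemma ofFn_cons' {n k : ℕ} (i : Fin k) (g : Fin n → Fin k) :
    List.ofFn (Fin.cons i g : Fin (n+1) → Fin k) = i :: List.ofFn g := by
  rw [List.ofFn_succ]
  simp [Fin.cons_succ]

lemma expand_pow' {d k : ℕ} (M : Fin k → Matrix (Fin d) (Fin d) ℝ) (n : ℕ) :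
    (∑ i, M i) ^ n = ∑ f : Fin n → Fin k, wordProd M (List.ofFn f) := by
  induction n with
  | zero => simp [wordProd]
  | succ n ih =>
    rw [pow_succ', ih]
    rw [← Equiv.sum_comp (Fin.consEquiv (fun _ : Fin (n+1) => Fin k))
        (fun f => wordProd M (List.ofFn f))]
    rw [Fintype.sum_prod_type, Finset.sum_mul_sum]
    refine Finset.sum_congr rfl fun i _ => Finset.sum_congr rfl fun g _ => ?_
    rw [show ((Fin.consEquiv (fun _ : Fin (n+1) => Fin k)) (i, g) : Fin (n+1) → Fin k)
        = Fin.cons i g from rfl, ofFn_cons', wordProd_cons']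

lemma pow_entries_nonneg' {d : ℕ} {A : Matrix (Fin d) (Fin d) ℝ}
    (hA : ∀ a b, 0 ≤ A a b) (n : ℕ) : ∀ a b, 0 ≤ (A ^ n) a b := by
  induction n with
  | zero => intro a b; by_cases hab : a = b <;> simp [Matrix.one_apply, hab]
  | succ n ih =>
    intro a b
    rw [pow_succ, Matrix.mul_apply]
    exact Finset.sum_nonneg fun c _ => mul_nonneg (ih a c) (hA c b)

lemma diag_pow_ge' {d : ℕ} {B : Matrix (Fin d) (Fin d) ℝ}
    (hB : ∀ a b, 0 ≤ B a b) (a : Fin d) (t : ℕ) : (B a a) ^ t ≤ (B ^ t) a a := by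
  induction t with
  | zero => simp [Matrix.one_apply]
  | succ t ih =>
    rw [pow_succ, pow_succ, Matrix.mul_apply]
    calc B a a ^ t * B a a ≤ (B ^ t) a a * B a a :=
          mul_le_mul_of_nonneg_right ih (hB a a)
      _ ≤ ∑ c, (B ^ t) a c * B c a :=
          Finset.single_le_sum (f := fun c => (B ^ t) a c * B c a)
            (fun c _ => mul_nonneg (pow_entries_nonneg' hB t a c) (hB c a)) (Finset.mem_univ a)

lemma pow_ne_zero_of_posirred' {d : ℕ} [NeZero d] {A : Matrix (Fin d) (Fin d) ℝ}
    (hA : ∀ a b, 0 ≤ A a b) {ℓ : ℕ}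
    (hirr : ∀ a b, 0 < (∑ j ∈ Finset.Icc 1 ℓ, A ^ j) a b) (n : ℕ) : A ^ n ≠ 0 := by
  have hd : 0 < d := Nat.pos_of_ne_zero (NeZero.ne d)
  set a : Fin d := ⟨0, hd⟩
  intro h0
  have h := hirr a a
  rw [Matrix.sum_apply] at h
  obtain ⟨j, hj, hjpos⟩ := Finset.exists_lt_of_sum_lt (f := fun _ => (0:ℝ))
    (g := fun j => (A ^ j) a a) (by simpa using h)
  have hj1 : 1 ≤ j := (Finset.mem_Icc.mp hj).1
  have h1 : 0 < ((A ^ j) a a) ^ n.succ := pow_pos hjpos _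
  have h3 : (0:ℝ) < ((A ^ j) ^ n.succ) a a :=
    lt_of_lt_of_le h1 (diag_pow_ge' (pow_entries_nonneg' hA j) a n.succ)
  rw [← pow_mul] at h3
  have hle : n ≤ j * n.succ := le_trans (Nat.le_succ n) (Nat.le_mul_of_pos_left n.succ hj1)
  have : A ^ (j * n.succ) = 0 := by
    rw [show j * n.succ = n + (j * n.succ - n) by omega, pow_add, h0, zero_mul]
  rw [this] at h3
  simp at h3

lemma rpow_inv_nat_tendsto_one' {x : ℝ} (hx : 0 < x) :
    Tendsto (fun n : ℕ => x ^ ((n : ℝ)⁻¹)) atTop (nhds 1) := by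
  have h1 : Tendsto (fun n : ℕ => Real.log x * (n : ℝ)⁻¹) atTop (nhds 0) := by
    have := tendsto_inv_atTop_nhds_zero_nat.const_mul (Real.log x)
    simpa using this
  have h2 := (Real.continuous_exp.tendsto 0).comp h1
  rw [Real.exp_zero] at h2
  refine h2.congr fun n => ?_
  simp only [Function.comp]
  rw [Real.rpow_def_of_pos hx]

lemma key_rho {d k : ℕ} [NeZero d] [NeZero k]
    (M : Fin k → Matrix (Fin d) (Fin d) ℝ)
    (hM0 : ∀ i a b, 0 ≤ M i a b) {ℓ : ℕ}
    (hirr : ∀ a b, 0 < (∑ j ∈ Finset.Icc 1 ℓ, (∑ i, M i) ^ j) a b)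
    (entM rhoM : ℝ)
    (hent : Tendsto (fun n : ℕ =>
        (n : ℝ)⁻¹ * Real.log (Set.ncard {f : Fin n → Fin k | wordProd M (List.ofFn f) ≠ 0}))
      atTop (nhds entM))
    (hrho : Tendsto (fun n : ℕ => mnorm ((∑ i, M i) ^ n) ^ ((n : ℝ))⁻¹) atTop (nhds rhoM))
    (C lam : ℝ) (hC : 0 < C)
    (hULE : ∀ w : List (Fin k), w ≠ [] →
      wordProd M w = 0 ∨
        (C⁻¹ * Real.exp (lam * w.length) ≤ mnorm (wordProd M w) ∧
          mnorm (wordProd M w) ≤ C * Real.exp (lam * w.length))) :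
    rhoM = Real.exp entM * Real.exp lam := by
  classical
  have hAnn : ∀ a b, 0 ≤ (∑ i, M i) a b := by
    intro a b; rw [Matrix.sum_apply]
    exact Finset.sum_nonneg fun i _ => hM0 i a b
  have hpow := pow_ne_zero_of_posirred' hAnn hirr
  set Nn : (n : ℕ) → ℕ := fun n =>
    ((Finset.univ.filter fun f : Fin n → Fin k => wordProd M (List.ofFn f) ≠ 0)).card with hNndef
  have hNcard : ∀ n : ℕ,
      Set.ncard {f : Fin n → Fin k | wordProd M (List.ofFn f) ≠ 0} = Nn n := by
    intro n
    rw [show Nn n = ((Finset.univ.filter fun f : Fin n → Fin k =>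
      wordProd M (List.ofFn f) ≠ 0)).card from rfl, ← Set.ncard_coe_finset]
    congr 1; ext f; simp
  have hSsum : ∀ n : ℕ, mnorm ((∑ i, M i) ^ n)
      = ∑ f ∈ (Finset.univ.filter fun f : Fin n → Fin k => wordProd M (List.ofFn f) ≠ 0),
          mnorm (wordProd M (List.ofFn f)) := by
    intro n
    rw [expand_pow', mnorm_sum' _ _ (fun f _ => wordProd_nonneg' hM0 _)]
    symm
    apply Finset.sum_subset (Finset.filter_subset _ _)
    intro f _ hf
    simp only [Finset.mem_filter, Finset.mem_univ, true_and, not_not] at hf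
    rw [hf, mnorm_zero']
  have hNpos : ∀ n : ℕ, 0 < Nn n := by
    intro n
    rw [hNndef, Finset.card_pos]
    by_contra hempty
    rw [Finset.not_nonempty_iff_eq_empty] at hempty
    have h := hSsum n
    rw [hempty, Finset.sum_empty] at h
    exact (mnorm_pos' (hpow n)).ne' h
  have hbounds : ∀ n : ℕ, 1 ≤ n →
      (Nn n : ℝ) * (C⁻¹ * Real.exp (lam * n)) ≤ mnorm ((∑ i, M i) ^ n) ∧
      mnorm ((∑ i, M i) ^ n) ≤ (Nn n : ℝ) * (C * Real.exp (lam * n)) := by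
    intro n hn
    rw [hSsum n]
    have hterm : ∀ f ∈ (Finset.univ.filter fun f : Fin n → Fin k => wordProd M (List.ofFn f) ≠ 0),
        C⁻¹ * Real.exp (lam * n) ≤ mnorm (wordProd M (List.ofFn f)) ∧
        mnorm (wordProd M (List.ofFn f)) ≤ C * Real.exp (lam * n) := by
      intro f hf
      simp only [Finset.mem_filter, Finset.mem_univ, true_and] at hf
      have hne : List.ofFn f ≠ [] := by
        intro h
        have := congrArg List.length h
        simp at this
        omega
      have h := (hULE (List.ofFn f) hne).resolve_left hf
      simpa using h
    constructor
    · have h := Finset.card_nsmul_le_sum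
        (Finset.univ.filter fun f : Fin n → Fin k => wordProd M (List.ofFn f) ≠ 0)
        (fun f => mnorm (wordProd M (List.ofFn f))) (C⁻¹ * Real.exp (lam * n))
        (fun f hf => (hterm f hf).1)
      simpa [nsmul_eq_mul, hNndef] using h
    · have h := Finset.sum_le_card_nsmul
        (Finset.univ.filter fun f : Fin n → Fin k => wordProd M (List.ofFn f) ≠ 0)
        (fun f => mnorm (wordProd M (List.ofFn f))) (C * Real.exp (lam * n))
        (fun f hf => (hterm f hf).2)
      simpa [nsmul_eq_mul, hNndef] using h
  have hentN : Tendsto (fun n : ℕ => (n:ℝ)⁻¹ * Real.log (Nn n)) atTop (nhds entM) :=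
    hent.congr fun n => by rw [hNcard n]
  have tN : Tendsto (fun n : ℕ => (Nn n : ℝ) ^ ((n:ℝ)⁻¹)) atTop (nhds (Real.exp entM)) := by
    have h2 := (Real.continuous_exp.tendsto entM).comp hentN
    refine h2.congr fun n => ?_
    simp only [Function.comp]
    rw [Real.rpow_def_of_pos (by exact_mod_cast hNpos n), mul_comm]
  have tCinv := rpow_inv_nat_tendsto_one' (inv_pos.mpr hC)
  have tC := rpow_inv_nat_tendsto_one' hC
  have tlow : Tendsto (fun n : ℕ => C⁻¹ ^ ((n:ℝ)⁻¹) * ((Nn n : ℝ) ^ ((n:ℝ)⁻¹) * Real.exp lam))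
      atTop (nhds (1 * (Real.exp entM * Real.exp lam))) :=
    tCinv.mul (tN.mul tendsto_const_nhds)
  have thigh : Tendsto (fun n : ℕ => C ^ ((n:ℝ)⁻¹) * ((Nn n : ℝ) ^ ((n:ℝ)⁻¹) * Real.exp lam))
      atTop (nhds (1 * (Real.exp entM * Real.exp lam))) :=
    tC.mul (tN.mul tendsto_const_nhds)
  have hexp_rpow : ∀ n : ℕ, 1 ≤ n → (Real.exp (lam * n)) ^ ((n:ℝ)⁻¹) = Real.exp lam := by
    intro n hn
    have hn0 : (n : ℝ) ≠ 0 := Nat.cast_ne_zero.mpr (by omega)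
    rw [Real.rpow_def_of_pos (Real.exp_pos _), Real.log_exp, mul_assoc,
      mul_inv_cancel₀ hn0, mul_one]
  have hlowev : ∀ᶠ n : ℕ in atTop,
      C⁻¹ ^ ((n:ℝ)⁻¹) * ((Nn n : ℝ) ^ ((n:ℝ)⁻¹) * Real.exp lam)
        ≤ mnorm ((∑ i, M i) ^ n) ^ ((n:ℝ)⁻¹) := by
    filter_upwards [eventually_ge_atTop 1] with n hn
    have h1 : ((Nn n : ℝ) * (C⁻¹ * Real.exp (lam * n))) ^ ((n:ℝ)⁻¹)
        ≤ mnorm ((∑ i, M i) ^ n) ^ ((n:ℝ)⁻¹) :=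
      Real.rpow_le_rpow (by positivity) (hbounds n hn).1 (by positivity)
    calc C⁻¹ ^ ((n:ℝ)⁻¹) * ((Nn n : ℝ) ^ ((n:ℝ)⁻¹) * Real.exp lam)
        = ((Nn n : ℝ) * (C⁻¹ * Real.exp (lam * n))) ^ ((n:ℝ)⁻¹) := by
          rw [Real.mul_rpow (by positivity) (by positivity),
            Real.mul_rpow (by positivity) (by positivity), hexp_rpow n hn]
          ring
      _ ≤ _ := h1
  have hhighev : ∀ᶠ n : ℕ in atTop,
      mnorm ((∑ i, M i) ^ n) ^ ((n:ℝ)⁻¹)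
        ≤ C ^ ((n:ℝ)⁻¹) * ((Nn n : ℝ) ^ ((n:ℝ)⁻¹) * Real.exp lam) := by
    filter_upwards [eventually_ge_atTop 1] with n hn
    have h1 : mnorm ((∑ i, M i) ^ n) ^ ((n:ℝ)⁻¹)
        ≤ ((Nn n : ℝ) * (C * Real.exp (lam * n))) ^ ((n:ℝ)⁻¹) :=
      Real.rpow_le_rpow (mnorm_nonneg' _) (hbounds n hn).2 (by positivity)
    calc mnorm ((∑ i, M i) ^ n) ^ ((n:ℝ)⁻¹)
        ≤ ((Nn n : ℝ) * (C * Real.exp (lam * n))) ^ ((n:ℝ)⁻¹) := h1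
      _ = C ^ ((n:ℝ)⁻¹) * ((Nn n : ℝ) ^ ((n:ℝ)⁻¹) * Real.exp lam) := by
          rw [Real.mul_rpow (by positivity) (by positivity),
            Real.mul_rpow (by positivity) (by positivity), hexp_rpow n hn]
          ring
  have hle1 : 1 * (Real.exp entM * Real.exp lam) ≤ rhoM :=
    le_of_tendsto_of_tendsto tlow hrho hlowev
  have hle2 : rhoM ≤ 1 * (Real.exp entM * Real.exp lam) :=
    le_of_tendsto_of_tendsto hrho thigh hhighev
  rw [one_mul] at hle1 hle2
  exact le_antisymm hle2 hle1

theorem stmt2 {d k : ℕ} [NeZero d] [NeZero k]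
    (M : Fin k → Matrix (Fin d) (Fin d) ℝ)
    (hpos : PosIrred M)
    (entM rhoM : ℝ)
    (hent : Tendsto (fun n : ℕ =>
        (n : ℝ)⁻¹ * Real.log (Set.ncard {f : Fin n → Fin k | wordProd M (List.ofFn f) ≠ 0}))
      atTop (nhds entM))
    (hrho : Tendsto (fun n : ℕ => mnorm ((∑ i, M i) ^ n) ^ ((n : ℝ))⁻¹) atTop (nhds rhoM)) :
    HasULE M ↔ ∃ C : ℝ, 0 < C ∧ ∀ w : List (Fin k), w ≠ [] → wordProd M w ≠ 0 →
      C⁻¹ * (rhoM / Real.exp entM) ^ w.length ≤ mnorm (wordProd M w) ∧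
      mnorm (wordProd M w) ≤ C * (rhoM / Real.exp entM) ^ w.length := by
  obtain ⟨hM0, ℓ, hℓ1, hirr⟩ := hpos
  constructor
  · rintro ⟨C, hC, lam, hULE⟩
    have key := key_rho M hM0 hirr entM rhoM hent hrho C lam hC hULE
    have hr : rhoM / Real.exp entM = Real.exp lam := by
      rw [key, mul_comm]
      exact mul_div_cancel_right₀ _ (Real.exp_ne_zero entM)
    refine ⟨C, hC, fun w hw hwne => ?_⟩
    have h := (hULE w hw).resolve_left hwne
    rw [hr]
    have : Real.exp lam ^ w.length = Real.exp (lam * w.length) := by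
      rw [mul_comm, Real.exp_nat_mul]
    rw [this]
    exact h
  · rintro ⟨C, hC, hbound⟩
    -- find a nonzero M i
    have hAnn : ∀ a b, 0 ≤ (∑ i, M i) a b := by
      intro a b; rw [Matrix.sum_apply]
      exact Finset.sum_nonneg fun i _ => hM0 i a b
    have hA1 : (∑ i, M i) ^ 1 ≠ 0 := pow_ne_zero_of_posirred' hAnn hirr 1
    rw [pow_one] at hA1
    have hex : ∃ i : Fin k, M i ≠ 0 := by
      by_contra hc
      push_neg at hc
      apply hA1
      rw [Finset.sum_congr rfl fun i _ => hc i, Finset.sum_const, smul_zero]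
    obtain ⟨i, hi⟩ := hex
    have hwi : wordProd M [i] = M i := by
      rw [show ([i] : List (Fin k)) = i :: [] from rfl, wordProd_cons']
      simp [wordProd]
    have hib := hbound [i] (by simp) (by rw [hwi]; exact hi)
    have hrpos : 0 < rhoM / Real.exp entM := by
      have h1 : 0 < mnorm (wordProd M [i]) := mnorm_pos' (by rw [hwi]; exact hi)
      have h2 := hib.2
      simp only [List.length_cons, List.length_nil, pow_one] at h2
      nlinarith
    refine ⟨C, hC, Real.log (rhoM / Real.exp entM), fun w hw => ?_⟩
    by_cases hz : wordProd M w = 0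
    · exact Or.inl hz
    · right
      have he : Real.exp (Real.log (rhoM / Real.exp entM) * w.length)
          = (rhoM / Real.exp entM) ^ w.length := by
        rw [mul_comm, Real.exp_nat_mul, Real.exp_log hrpos]
      rw [he]
      exact hbound w hw hz
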